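/- Fix a real p ∈ (0,1) and an integer K ≥ 2. Let f^{OA} be the OA preference with identity ranking, i.e., f^{OA}(i|S) = (1−p)·p^{r−1}/(1−p^{|S|}) with r = |{j ∈ S : j ≤ i}|, for each S ∈ 𝒮 and i ∈ S. Then the supremum, over all probability distributions λ on 𝒮 (λ : 𝒮 → [0,∞) with Σ_{S∈𝒮} λ(S) = 1), of the infimum over all preferences f' ∈ M_p whose ranking σ_{f'} is not the identity of D_λ(f^{OA} ‖ f'), is at most log(1/p)·(1−p)/(K−1+p). -/

import Mathlib

/-- Ordinal Attraction choice probability of item `i` from display set `S`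
under the ranking `σ`. -/
noncomputable def oa {K : ℕ} (p : ℝ) (σ : Equiv.Perm (Fin K))
    (S : Finset (Fin K)) (i : Fin K) : ℝ :=
  (1 - p) * p ^ ((S.filter fun j => σ j ≤ σ i).card - 1) / (1 - p ^ S.card)

open Finset
open Fin.NatCast

lemma rank_sum {α : Type*} [LinearOrder α] (g : ℕ → ℝ) (n : ℕ) :
    ∀ T : Finset α, T.card = n →
      ∑ x ∈ T, g ((T.filter (fun y => y < x)).card) = ∑ j ∈ Finset.range n, g j := by
  induction n with
  | zero => intro T hT; simp [Finset.card_eq_zero.mp hT]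
  | succ n ih =>
    intro T hT
    have hne : T.Nonempty := Finset.card_pos.mp (by omega)
    set M := T.max' hne with hM
    have hMT : M ∈ T := T.max'_mem hne
    have h1 : T.filter (fun y => y < M) = T.erase M := by
      ext x
      simp only [Finset.mem_filter, Finset.mem_erase]
      constructor
      · rintro ⟨hx, hlt⟩; exact ⟨ne_of_lt hlt, hx⟩
      · rintro ⟨hne', hx⟩
        exact ⟨hx, lt_of_le_of_ne (T.le_max' x hx) hne'⟩
    have h2 : ∀ x ∈ T.erase M, T.filter (fun y => y < x) = (T.erase M).filter (fun y => y < x) := by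
      intro x hx
      ext y
      simp only [Finset.mem_filter, Finset.mem_erase]
      constructor
      · rintro ⟨hy, hlt⟩
        refine ⟨⟨?_, hy⟩, hlt⟩
        rintro rfl
        exact absurd (lt_of_lt_of_le hlt (T.le_max' x (Finset.mem_of_mem_erase hx))) (lt_irrefl _)
      · rintro ⟨⟨_, hy⟩, hlt⟩; exact ⟨hy, hlt⟩
    have hcard : (T.erase M).card = n := by
      rw [Finset.card_erase_of_mem hMT, hT]; rfl
    calc ∑ x ∈ T, g ((T.filter (fun y => y < x)).card)
        = g ((T.filter (fun y => y < M)).card)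
          + ∑ x ∈ T.erase M, g ((T.filter (fun y => y < x)).card) := by
          rw [← Finset.add_sum_erase _ _ hMT]
      _ = g n + ∑ x ∈ T.erase M, g (((T.erase M).filter (fun y => y < x)).card) := by
          rw [h1, hcard]
          congr 1
          exact Finset.sum_congr rfl fun x hx => by rw [h2 x hx]
      _ = g n + ∑ j ∈ Finset.range n, g j := by rw [ih _ hcard]
      _ = ∑ j ∈ Finset.range (n+1), g j := by rw [Finset.sum_range_succ]; ring

variable {K : ℕ} {p : ℝ}

lemma pow_card_lt_one (hp0 : 0 < p) (hp1 : p < 1) {S : Finset (Fin K)} (hS : S.Nonempty) :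
    p ^ S.card < 1 :=
  pow_lt_one₀ hp0.le hp1 (by simpa [Finset.card_pos] using hS.card_pos.ne')

lemma oa_pos (hp0 : 0 < p) (hp1 : p < 1) (σ : Equiv.Perm (Fin K)) {S : Finset (Fin K)}
    {i : Fin K} (hi : i ∈ S) : 0 < oa p σ S i := by
  have h1 : (0:ℝ) < 1 - p ^ S.card := by
    have := pow_card_lt_one hp0 hp1 ⟨i, hi⟩; linarith
  have h2 : (0:ℝ) < 1 - p := by linarith
  exact div_pos (mul_pos h2 (pow_pos hp0 _)) h1

lemma filter_le_eq_insert (σ : Equiv.Perm (Fin K)) (S : Finset (Fin K)) {i : Fin K}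
    (hi : i ∈ S) :
    S.filter (fun j => σ j ≤ σ i) = insert i (S.filter (fun j => σ j < σ i)) := by
  ext j
  simp only [Finset.mem_filter, Finset.mem_insert]
  constructor
  · rintro ⟨hj, hle⟩
    rcases lt_or_eq_of_le hle with h | h
    · exact Or.inr ⟨hj, h⟩
    · exact Or.inl (σ.injective h)
  · rintro (rfl | ⟨hj, hlt⟩)
    · exact ⟨hi, le_rfl⟩
    · exact ⟨hj, hlt.le⟩

lemma filter_le_card (σ : Equiv.Perm (Fin K)) (S : Finset (Fin K)) {i : Fin K} (hi : i ∈ S) :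
    (S.filter (fun j => σ j ≤ σ i)).card = (S.filter (fun j => σ j < σ i)).card + 1 := by
  rw [filter_le_eq_insert σ S hi, Finset.card_insert_of_notMem (by simp)]

lemma oa_eq (σ : Equiv.Perm (Fin K)) (S : Finset (Fin K)) {i : Fin K} (hi : i ∈ S) :
    oa p σ S i = (1 - p) * p ^ ((S.filter fun j => σ j < σ i).card) / (1 - p ^ S.card) := by
  rw [oa, filter_le_card σ S hi, Nat.add_sub_cancel]

lemma oa_sum (hp0 : 0 < p) (hp1 : p < 1) (σ : Equiv.Perm (Fin K)) {S : Finset (Fin K)}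
    (hS : S.Nonempty) : ∑ i ∈ S, oa p σ S i = 1 := by
  have h1 : (0:ℝ) < 1 - p ^ S.card := by
    have := pow_card_lt_one hp0 hp1 hS; linarith
  have key : ∀ i ∈ S, (S.filter (fun j => σ j < σ i)).card
      = ((S.image σ).filter (fun y => y < σ i)).card := by
    intro i _
    rw [Finset.filter_image, Finset.card_image_of_injective _ σ.injective]
  have h2 : ∑ i ∈ S, oa p σ S i
      = (∑ i ∈ S, p ^ (((S.image σ).filter (fun y => y < σ i)).card)) * (1 - p) / (1 - p ^ S.card) := by
    rw [Finset.sum_mul, Finset.sum_div]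
    refine Finset.sum_congr rfl fun i hi => ?_
    rw [oa_eq σ S hi, key i hi]; ring
  have h3 : ∑ i ∈ S, p ^ (((S.image σ).filter (fun y => y < σ i)).card)
      = ∑ x ∈ S.image σ, p ^ (((S.image σ).filter (fun y => y < x)).card) :=
    (Finset.sum_image (f := fun x => p ^ (((S.image σ).filter (fun y => y < x)).card))
      (fun i _ j _ h => σ.injective h)).symm
  have h4 := rank_sum (fun n => p ^ n) (S.image σ).card (S.image σ) rfl
  have h5 : (S.image σ).card = S.card := Finset.card_image_of_injective _ σ.injective
  have h6 : ∑ j ∈ Finset.range S.card, p ^ j = (1 - p ^ S.card) / (1 - p) := by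
    have := geom_sum_eq (x := p) (by linarith) S.card
    rw [this]
    rw [div_eq_div_iff (by linarith) (by linarith)]
    ring
  rw [h2, h3, h4, h5, h6]
  rw [div_mul_eq_mul_div, div_div, mul_comm (1 - p ^ S.card) (1-p), mul_comm (1-p) (1 - p ^ S.card) ]
  exact div_self (by nlinarith)

lemma oa_sep (hp0 : 0 < p) (hp1 : p < 1) (σ : Equiv.Perm (Fin K)) {S : Finset (Fin K)}
    {i i' : Fin K} (hi : i ∈ S) (hi' : i' ∈ S) (h : σ i' < σ i) :
    oa p σ S i ≤ p * oa p σ S i' := by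
  have h1 : (0:ℝ) < 1 - p ^ S.card := by
    have := pow_card_lt_one hp0 hp1 ⟨i, hi⟩; linarith
  have hsub : S.filter (fun j => σ j ≤ σ i') ⊆ S.filter (fun j => σ j < σ i) := by
    intro j hj
    rw [Finset.mem_filter] at hj ⊢
    exact ⟨hj.1, lt_of_le_of_lt hj.2 h⟩
  have hcard : (S.filter (fun j => σ j ≤ σ i')).card ≤ (S.filter (fun j => σ j < σ i)).card :=
    Finset.card_le_card hsub
  rw [oa_eq σ S hi, oa]
  have hpow : p ^ ((S.filter (fun j => σ j < σ i)).card)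
      ≤ p ^ ((S.filter (fun j => σ j ≤ σ i')).card) :=
    pow_le_pow_of_le_one hp0.le hp1.le hcard
  have hc' : (S.filter (fun j => σ j ≤ σ i')).card = (S.filter (fun j => σ j < σ i')).card + 1 :=
    filter_le_card σ S hi'
  rw [div_le_iff₀ h1, ]
  have : p * ((1 - p) * p ^ ((S.filter (fun j => σ j ≤ σ i')).card - 1) / (1 - p ^ S.card)) * (1 - p ^ S.card)
      = (1 - p) * p ^ ((S.filter (fun j => σ j ≤ σ i')).card) := by
    rw [hc', Nat.add_sub_cancel]
    field_simp
    ring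
  rw [this]
  have h2 : (0:ℝ) < 1 - p := by linarith
  nlinarith [pow_pos hp0 ((S.filter (fun j => σ j < σ i)).card)]


lemma swap_val {a b : Fin K} (hne : (a:ℕ) ≠ (b:ℕ)) (x : Fin K) :
    ((Equiv.swap a b) x : ℕ) = if (x:ℕ) = (a:ℕ) then (b:ℕ) else if (x:ℕ) = (b:ℕ) then (a:ℕ) else (x:ℕ) := by
  rcases eq_or_ne x a with rfl | h1
  · rw [Equiv.swap_apply_left, if_pos rfl]
  · rcases eq_or_ne x b with rfl | h2
    · rw [Equiv.swap_apply_right, if_neg (fun h => hne h.symm), if_pos rfl]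
    · rw [Equiv.swap_apply_of_ne_of_ne h1 h2, if_neg (fun h => h1 (Fin.ext h)),
        if_neg (fun h => h2 (Fin.ext h))]

lemma swap_le_of_ne {a b : Fin K} (hab : (a:ℕ)+1 = (b:ℕ)) {i : Fin K}
    (hia : (i:ℕ) ≠ (a:ℕ)) (hib : (i:ℕ) ≠ (b:ℕ)) (j : Fin K) :
    Equiv.swap a b j ≤ Equiv.swap a b i ↔ j ≤ i := by
  simp only [Fin.le_def, swap_val (by omega : (a:ℕ) ≠ (b:ℕ))]
  split_ifs <;> omega

lemma swap_le_a {a b : Fin K} (hab : (a:ℕ)+1 = (b:ℕ)) {j : Fin K} (hjb : (j:ℕ) ≠ (b:ℕ)) :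
    Equiv.swap a b j ≤ Equiv.swap a b a ↔ j ≤ a := by
  simp only [Fin.le_def, swap_val (by omega : (a:ℕ) ≠ (b:ℕ))]
  split_ifs <;> omega

lemma swap_le_b {a b : Fin K} (hab : (a:ℕ)+1 = (b:ℕ)) {j : Fin K} (hja : (j:ℕ) ≠ (a:ℕ)) :
    Equiv.swap a b j ≤ Equiv.swap a b b ↔ j ≤ b := by
  simp only [Fin.le_def, swap_val (by omega : (a:ℕ) ≠ (b:ℕ))]
  split_ifs <;> omega

-- filter lemmas when both a b ∈ S
lemma filter_swap_a {a b : Fin K} (hab : (a:ℕ)+1 = (b:ℕ)) {S : Finset (Fin K)}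
    (hbS : b ∈ S) :
    S.filter (fun j => Equiv.swap a b j ≤ Equiv.swap a b a)
      = insert b (S.filter (fun j => j ≤ a)) := by
  ext j
  simp only [Finset.mem_filter, Finset.mem_insert]
  constructor
  · rintro ⟨hj, hle⟩
    rcases eq_or_ne ((j:ℕ)) ((b:ℕ)) with h | h
    · exact Or.inl (Fin.ext h)
    · exact Or.inr ⟨hj, (swap_le_a hab h).mp hle⟩
  · rintro (rfl | ⟨hj, hle⟩)
    · refine ⟨hbS, ?_⟩
      rw [Equiv.swap_apply_right, Equiv.swap_apply_left, Fin.le_def]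
      omega
    · have hjb : (j:ℕ) ≠ (b:ℕ) := by
        intro h
        have : (j:ℕ) ≤ (a:ℕ) := hle
        omega
      exact ⟨hj, (swap_le_a hab hjb).mpr hle⟩

lemma filter_swap_b {a b : Fin K} (hab : (a:ℕ)+1 = (b:ℕ)) {S : Finset (Fin K)}
    (hbS : b ∈ S) :
    S.filter (fun j => Equiv.swap a b j ≤ Equiv.swap a b b)
      = insert b (S.filter (fun j => j < a)) := by
  ext j
  simp only [Finset.mem_filter, Finset.mem_insert]
  constructor
  · rintro ⟨hj, hle⟩
    rcases eq_or_ne ((j:ℕ)) ((b:ℕ)) with h | h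
    · exact Or.inl (Fin.ext h)
    · refine Or.inr ⟨hj, ?_⟩
      simp only [Fin.le_def, swap_val (by omega : (a:ℕ) ≠ (b:ℕ))] at hle
      rw [Fin.lt_def]
      split_ifs at hle <;> omega
  · rintro (rfl | ⟨hj, hlt⟩)
    · exact ⟨hbS, le_rfl⟩
    · refine ⟨hj, ?_⟩
      rw [Fin.lt_def] at hlt
      simp only [Fin.le_def, swap_val (by omega : (a:ℕ) ≠ (b:ℕ))]
      split_ifs <;> omega

lemma filter_le_b {a b : Fin K} (hab : (a:ℕ)+1 = (b:ℕ)) {S : Finset (Fin K)}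
    (hbS : b ∈ S) :
    S.filter (fun j => j ≤ b) = insert b (S.filter (fun j => j ≤ a)) := by
  ext j
  simp only [Finset.mem_filter, Finset.mem_insert, Fin.le_def]
  constructor
  · rintro ⟨hj, hle⟩
    rcases eq_or_ne ((j:ℕ)) ((b:ℕ)) with h | h
    · exact Or.inl (Fin.ext h)
    · exact Or.inr ⟨hj, by omega⟩
  · rintro (rfl | ⟨hj, hle⟩)
    · exact ⟨hbS, le_rfl⟩
    · exact ⟨hj, by omega⟩

lemma filter_lt_insert {S : Finset (Fin K)} {i : Fin K} (hi : i ∈ S) :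
    S.filter (fun j => j ≤ i) = insert i (S.filter (fun j => j < i)) := by
  ext j
  simp only [Finset.mem_filter, Finset.mem_insert]
  constructor
  · rintro ⟨hj, hle⟩
    rcases lt_or_eq_of_le hle with h | h
    · exact Or.inr ⟨hj, h⟩
    · exact Or.inl h
  · rintro (rfl | ⟨hj, hlt⟩)
    · exact ⟨hi, le_rfl⟩
    · exact ⟨hj, hlt.le⟩

lemma oa_swap_eq_self {a b : Fin K} (hab : (a:ℕ)+1 = (b:ℕ)) {S : Finset (Fin K)}
    {i : Fin K} (hi : i ∈ S) (h : ¬(a ∈ S ∧ b ∈ S ∧ (i = a ∨ i = b))) :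
    oa p (Equiv.swap a b) S i = oa p 1 S i := by
  have hfil : S.filter (fun j => Equiv.swap a b j ≤ Equiv.swap a b i)
      = S.filter (fun j => j ≤ i) := by
    rcases eq_or_ne i a with rfl | hia
    · have hbS : b ∉ S := fun hb => h ⟨hi, hb, Or.inl rfl⟩
      refine Finset.filter_congr fun j hj => ?_
      have hjb : (j:ℕ) ≠ (b:ℕ) := fun hh => hbS (by rwa [← Fin.ext hh])
      exact swap_le_a hab hjb
    · rcases eq_or_ne i b with rfl | hib
      · have haS : a ∉ S := fun ha => h ⟨ha, hi, Or.inr rfl⟩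
        refine Finset.filter_congr fun j hj => ?_
        have hja : (j:ℕ) ≠ (a:ℕ) := fun hh => haS (by rwa [← Fin.ext hh])
        exact swap_le_b hab hja
      · refine Finset.filter_congr fun j hj => ?_
        exact swap_le_of_ne hab (fun hh => hia (Fin.ext hh)) (fun hh => hib (Fin.ext hh)) j
  rw [oa, oa, hfil]
  simp only [Equiv.Perm.one_apply]
  rfl

lemma kl_term_zero (hp0 : 0 < p) (hp1 : p < 1) {a b : Fin K} (hab : (a:ℕ)+1 = (b:ℕ))
    {S : Finset (Fin K)} {i : Fin K} (hi : i ∈ S)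
    (h : ¬(a ∈ S ∧ b ∈ S ∧ (i = a ∨ i = b))) :
    oa p 1 S i * Real.log (oa p 1 S i / oa p (Equiv.swap a b) S i) = 0 := by
  rw [oa_swap_eq_self hab hi h, div_self (oa_pos hp0 hp1 1 hi).ne', Real.log_one, mul_zero]

lemma kl_swap_zero (hp0 : 0 < p) (hp1 : p < 1) {a b : Fin K} (hab : (a:ℕ)+1 = (b:ℕ))
    {S : Finset (Fin K)} (h : ¬(a ∈ S ∧ b ∈ S)) :
    ∑ i ∈ S, oa p 1 S i * Real.log (oa p 1 S i / oa p (Equiv.swap a b) S i) = 0 := by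
  refine Finset.sum_eq_zero fun i hi => kl_term_zero hp0 hp1 hab hi ?_
  tauto

lemma kl_swap (hp0 : 0 < p) (hp1 : p < 1) {a b : Fin K} (hab : (a:ℕ)+1 = (b:ℕ))
    {S : Finset (Fin K)} (haS : a ∈ S) (hbS : b ∈ S) :
    ∑ i ∈ S, oa p 1 S i * Real.log (oa p 1 S i / oa p (Equiv.swap a b) S i)
      = (1-p)^2 * p ^ ((S.filter (fun j => j ≤ a)).card - 1) * (-Real.log p)
          / (1 - p ^ S.card) := by
  have hne : (a:ℕ) ≠ (b:ℕ) := by omega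
  have hab' : a ≠ b := fun h => hne (congrArg Fin.val h)
  have hm : (0:ℝ) < 1 - p ^ S.card := by
    have := pow_card_lt_one hp0 hp1 ⟨a, haS⟩; linarith
  have h1p : (0:ℝ) < 1 - p := by linarith
  have hba : ¬ b ≤ a := by rw [Fin.le_def]; omega
  have hba' : ¬ b < a := by rw [Fin.lt_def]; omega
  -- r and its positivity
  set r := (S.filter (fun j => j ≤ a)).card with hrdef
  have hr : 1 ≤ r := Finset.card_pos.mpr ⟨a, Finset.mem_filter.mpr ⟨haS, le_rfl⟩⟩
  obtain ⟨r', hr'⟩ : ∃ r', r = r' + 1 := ⟨r - 1, by omega⟩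
  -- card computations
  have cA1 : (S.filter (fun j => (1:Equiv.Perm (Fin K)) j ≤ (1:Equiv.Perm (Fin K)) a)).card = r := by
    simp only [Equiv.Perm.one_apply]
    rfl
  have cB1 : (S.filter (fun j => (1:Equiv.Perm (Fin K)) j ≤ (1:Equiv.Perm (Fin K)) b)).card = r + 1 := by
    show (S.filter (fun j => j ≤ b)).card = r + 1
    rw [filter_le_b hab hbS, Finset.card_insert_of_notMem (by simp [hba])]
  have cAs : (S.filter (fun j => Equiv.swap a b j ≤ Equiv.swap a b a)).card = r + 1 := by
    rw [filter_swap_a hab hbS, Finset.card_insert_of_notMem (by simp [hba])]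
  have crlt : r = (S.filter (fun j => j < a)).card + 1 := by
    rw [hrdef, filter_lt_insert haS, Finset.card_insert_of_notMem (by simp)]
  have cBs : (S.filter (fun j => Equiv.swap a b j ≤ Equiv.swap a b b)).card = r := by
    rw [filter_swap_b hab hbS, Finset.card_insert_of_notMem (by simp [hba']), ← crlt]
  -- values
  have vA1 : oa p 1 S a = (1-p) * p ^ r' / (1 - p ^ S.card) := by
    rw [oa, cA1, hr', Nat.add_sub_cancel]
  have vB1 : oa p 1 S b = (1-p) * p ^ (r'+1) / (1 - p ^ S.card) := by
    rw [oa, cB1, hr', Nat.add_sub_cancel]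
  have vAs : oa p (Equiv.swap a b) S a = (1-p) * p ^ (r'+1) / (1 - p ^ S.card) := by
    rw [oa, cAs, hr', Nat.add_sub_cancel]
  have vBs : oa p (Equiv.swap a b) S b = (1-p) * p ^ r' / (1 - p ^ S.card) := by
    rw [oa, cBs, hr', Nat.add_sub_cancel]
  have hsum : ∑ i ∈ S, oa p 1 S i * Real.log (oa p 1 S i / oa p (Equiv.swap a b) S i)
      = oa p 1 S a * Real.log (oa p 1 S a / oa p (Equiv.swap a b) S a)
        + oa p 1 S b * Real.log (oa p 1 S b / oa p (Equiv.swap a b) S b) :=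
    Finset.sum_eq_add_of_mem a b haS hbS hab'
      (fun c hc hcc => kl_term_zero hp0 hp1 hab hc (by tauto))
  rw [hsum, vA1, vB1, vAs, vBs]
  have hratio1 : (1-p) * p ^ r' / (1 - p ^ S.card) / ((1-p) * p ^ (r'+1) / (1 - p ^ S.card))
      = 1 / p := by
    rw [pow_succ]
    field_simp
  have hratio2 : (1-p) * p ^ (r'+1) / (1 - p ^ S.card) / ((1-p) * p ^ r' / (1 - p ^ S.card))
      = p := by
    rw [pow_succ]
    field_simp
  rw [hratio1, hratio2, one_div, Real.log_inv, hr', Nat.add_sub_cancel, pow_succ]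
  field_simp
  ring

section perS
variable [NeZero K]

lemma perS (hp0 : 0 < p) (hp1 : p < 1) (hK : 2 ≤ K) {S : Finset (Fin K)} (hS : 2 ≤ S.card) :
    ∑ k ∈ Finset.range (K-1), ((if k = K-2 then 1+p else 1)/((K:ℝ)-1+p)) *
      (∑ i ∈ S, oa p 1 S i * Real.log (oa p 1 S i / oa p (Equiv.swap (↑k) (↑(k+1))) S i))
    ≤ (1-p) * (-Real.log p) / ((K:ℝ)-1+p) := by
  have hKR : (2:ℝ) ≤ (K:ℝ) := by exact_mod_cast hK
  have hKp : (0:ℝ) < (K:ℝ)-1+p := by linarith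
  have hSne : S.Nonempty := Finset.card_pos.mp (by omega)
  have hm : (0:ℝ) < 1 - p ^ S.card := by have := pow_card_lt_one hp0 hp1 hSne; linarith
  have hL : 0 ≤ -Real.log p := by have := Real.log_neg hp0 hp1; linarith
  have h1p : (0:ℝ) < 1 - p := by linarith
  have hval : ∀ k, k < K → ((k : Fin K) : ℕ) = k := fun k hk => Fin.val_cast_of_lt hk
  have hw : ∀ k : ℕ, (0:ℝ) ≤ (if k = K-2 then 1+p else 1)/((K:ℝ)-1+p) := by
    intro k
    apply div_nonneg _ hKp.le
    split_ifs <;> linarith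
  set A := (Finset.range (K-1)).filter
      (fun k => ((k : ℕ) : Fin K) ∈ S ∧ (((k+1:ℕ)) : Fin K) ∈ S) with hA
  have hAsub : ∀ k ∈ A, k < K - 1 := fun k hk =>
    Finset.mem_range.mp (Finset.mem_filter.mp hk).1
  have hab : ∀ k, k < K - 1 → (((k : ℕ) : Fin K) : ℕ) + 1 = (((k+1:ℕ) : Fin K) : ℕ) := by
    intro k hk
    rw [hval k (by omega), hval (k+1) (by omega)]
  -- split sum
  rw [← Finset.sum_filter_add_sum_filter_not (Finset.range (K-1))
      (fun k => ((k : ℕ) : Fin K) ∈ S ∧ (((k+1:ℕ)) : Fin K) ∈ S)]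
  have hzero : ∑ k ∈ (Finset.range (K-1)).filter
      (fun k => ¬(((k : ℕ) : Fin K) ∈ S ∧ (((k+1:ℕ)) : Fin K) ∈ S)),
      ((if k = K-2 then 1+p else 1)/((K:ℝ)-1+p)) *
      (∑ i ∈ S, oa p 1 S i * Real.log (oa p 1 S i / oa p (Equiv.swap (↑k) (↑(k+1))) S i)) = 0 := by
    refine Finset.sum_eq_zero fun k hk => ?_
    obtain ⟨hkr, hns⟩ := Finset.mem_filter.mp hk
    rw [kl_swap_zero hp0 hp1 (hab k (Finset.mem_range.mp hkr)) hns, mul_zero]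
  rw [hzero, add_zero]
  -- now over A
  set t := A.card with ht
  -- t + 1 ≤ S.card
  have hcardA : t + 1 ≤ S.card := by
    have himg : Finset.image (fun k : ℕ => (k : Fin K)) A ⊆ S.erase (S.max' hSne) := by
      intro x hx
      obtain ⟨k, hk, rfl⟩ := Finset.mem_image.mp hx
      obtain ⟨hkr, hkS, hk1S⟩ := Finset.mem_filter.mp hk
      have hklt := Finset.mem_range.mp hkr
      refine Finset.mem_erase.mpr ⟨?_, hkS⟩
      have hlt : ((k:ℕ) : Fin K) < (((k+1:ℕ)) : Fin K) := by
        rw [Fin.lt_def, hval k (by omega), hval (k+1) (by omega)]; omega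
      have hle := S.le_max' _ hk1S
      exact ne_of_lt (lt_of_lt_of_le hlt hle)
    have hinj : Set.InjOn (fun k : ℕ => (k : Fin K)) A := by
      intro x hx y hy hxy
      have hx' := hval x (by have := hAsub x hx; omega)
      have hy' := hval y (by have := hAsub y hy; omega)
      have := congrArg Fin.val hxy
      simp only at this
      rw [hx', hy'] at this
      exact this
    have h1 : t = (Finset.image (fun k : ℕ => (k : Fin K)) A).card :=
      (Finset.card_image_of_injOn hinj).symm
    have h2 := Finset.card_le_card himg
    rw [Finset.card_erase_of_mem (S.max'_mem hSne)] at h2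
    omega
  -- rank bound : e_k + 1 ≤ r_k
  have hrank : ∀ k ∈ A, (A.filter (fun y => y < k)).card + 1
      ≤ (S.filter (fun j => j ≤ ((k:ℕ) : Fin K))).card := by
    intro k hk
    have hklt := hAsub k hk
    have hmaps : ∀ x ∈ insert k (A.filter (fun y => y < k)),
        ((x : ℕ) : Fin K) ∈ S.filter (fun j => j ≤ ((k:ℕ) : Fin K)) := by
      intro x hx
      rcases Finset.mem_insert.mp hx with rfl | hx'
      · exact Finset.mem_filter.mpr ⟨(Finset.mem_filter.mp hk).2.1, le_rfl⟩
      · obtain ⟨hxA, hxk⟩ := Finset.mem_filter.mp hx'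
        have hxlt := hAsub x hxA
        refine Finset.mem_filter.mpr ⟨(Finset.mem_filter.mp hxA).2.1, ?_⟩
        rw [Fin.le_def, hval x (by omega), hval k (by omega)]
        omega
    have hinj : Set.InjOn (fun x : ℕ => ((x : ℕ) : Fin K))
        (↑(insert k (A.filter (fun y => y < k))) : Set ℕ) := by
      intro x hx y hy hxy
      simp only [Finset.coe_insert, Set.mem_insert_iff, Finset.mem_coe] at hx hy
      have hx' : x < K := by
        rcases hx with rfl | hx'
        · omega
        · have := hAsub x (Finset.mem_filter.mp hx').1; omega
      have hy' : y < K := by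
        rcases hy with rfl | hy'
        · omega
        · have := hAsub y (Finset.mem_filter.mp hy').1; omega
      have := congrArg Fin.val hxy
      simp only at this
      rw [hval x hx', hval y hy'] at this
      exact this
    have := Finset.card_le_card_of_injOn _ hmaps hinj
    rwa [Finset.card_insert_of_notMem (by simp)] at this
  -- pointwise bound on A
  have hstep : ∀ k ∈ A,
      ((if k = K-2 then 1+p else 1)/((K:ℝ)-1+p)) *
        (∑ i ∈ S, oa p 1 S i * Real.log (oa p 1 S i / oa p (Equiv.swap (↑k) (↑(k+1))) S i))
      ≤ ((1-p)^2 * (-Real.log p) / (1 - p ^ S.card) / ((K:ℝ)-1+p)) *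
          ((if k = K-2 then 1+p else 1) * p ^ ((A.filter (fun y => y < k)).card)) := by
    intro k hk
    obtain ⟨hkr, hkS, hk1S⟩ := Finset.mem_filter.mp hk
    have hklt := Finset.mem_range.mp hkr
    rw [kl_swap hp0 hp1 (hab k hklt) hkS hk1S]
    have hrk := hrank k hk
    have hr1 : 1 ≤ (S.filter (fun j => j ≤ ((k:ℕ) : Fin K))).card := by omega
    have hpow : p ^ ((S.filter (fun j => j ≤ ((k:ℕ) : Fin K))).card - 1)
        ≤ p ^ ((A.filter (fun y => y < k)).card) :=
      pow_le_pow_of_le_one hp0.le hp1.le (by omega)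
    have hc : (0:ℝ) ≤ (1-p)^2 * (-Real.log p) / (1 - p ^ S.card) :=
      div_nonneg (mul_nonneg (sq_nonneg _) hL) hm.le
    have hwk : (0:ℝ) ≤ (if k = K-2 then (1:ℝ)+p else 1) := by split_ifs <;> linarith
    calc ((if k = K-2 then 1+p else 1)/((K:ℝ)-1+p)) *
          ((1-p)^2 * p ^ ((S.filter (fun j => j ≤ ((k:ℕ) : Fin K))).card - 1) * (-Real.log p)
            / (1 - p ^ S.card))
        = ((if k = K-2 then 1+p else 1) * p ^ ((S.filter (fun j => j ≤ ((k:ℕ) : Fin K))).card - 1))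
            * ((1-p)^2 * (-Real.log p) / (1 - p ^ S.card) / ((K:ℝ)-1+p)) := by ring
      _ ≤ ((if k = K-2 then 1+p else 1) * p ^ ((A.filter (fun y => y < k)).card))
            * ((1-p)^2 * (-Real.log p) / (1 - p ^ S.card) / ((K:ℝ)-1+p)) := by
          apply mul_le_mul_of_nonneg_right _ (div_nonneg hc hKp.le)
          exact mul_le_mul_of_nonneg_left hpow hwk
      _ = ((1-p)^2 * (-Real.log p) / (1 - p ^ S.card) / ((K:ℝ)-1+p)) *
            ((if k = K-2 then 1+p else 1) * p ^ ((A.filter (fun y => y < k)).card)) := by ring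
  -- sum bound
  have hsum1 : ∑ k ∈ A, ((if k = K-2 then (1:ℝ)+p else 1) * p ^ ((A.filter (fun y => y < k)).card))
      ≤ (1 - p ^ S.card) / (1 - p) := by
    have hsplit : ∀ k : ℕ, (if k = K-2 then (1:ℝ)+p else 1) * p ^ ((A.filter (fun y => y < k)).card)
        = p ^ ((A.filter (fun y => y < k)).card)
          + (if k = K-2 then p * p ^ ((A.filter (fun y => y < k)).card) else 0) := by
      intro k; split_ifs <;> ring
    rw [Finset.sum_congr rfl fun k _ => hsplit k, Finset.sum_add_distrib]
    have hrs := rank_sum (fun n => p ^ n) t A rfl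
    rw [hrs]
    rw [Finset.sum_ite_eq' A (K-2) (fun k => p * p ^ ((A.filter (fun y => y < k)).card))]
    have hite : (if K-2 ∈ A then p * p ^ ((A.filter (fun y => y < (K-2))).card) else 0) ≤ p ^ t := by
      split_ifs with hmem
      · have hmax : A.filter (fun y => y < (K-2)) = A.erase (K-2) := by
          ext j
          simp only [Finset.mem_filter, Finset.mem_erase]
          constructor
          · rintro ⟨hj, hlt⟩; exact ⟨by omega, hj⟩
          · rintro ⟨hne, hj⟩
            have := hAsub j hj
            exact ⟨hj, by omega⟩
        have ht1 : 1 ≤ t := Finset.card_pos.mpr ⟨K-2, hmem⟩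
        rw [hmax, Finset.card_erase_of_mem hmem, ← ht]
        exact le_of_eq (by rw [← pow_succ']; congr 1; omega)
      · exact (pow_pos hp0 t).le
    have hgeom : ∑ j ∈ Finset.range (t+1), p ^ j ≤ (1 - p ^ S.card) / (1 - p) := by
      have h1 : ∑ j ∈ Finset.range (t+1), p ^ j ≤ ∑ j ∈ Finset.range S.card, p ^ j := by
        apply Finset.sum_le_sum_of_subset_of_nonneg
        · exact Finset.range_mono (by omega)
        · intro j _ _; exact (pow_pos hp0 j).le
      have h2 : ∑ j ∈ Finset.range S.card, p ^ j = (1 - p ^ S.card) / (1 - p) := by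
        rw [geom_sum_eq (by linarith : p ≠ 1) S.card, div_eq_div_iff (by linarith) (by linarith)]
        ring
      linarith
    have hsrs : ∑ j ∈ Finset.range t, (fun n => p ^ n) j + p ^ t
        = ∑ j ∈ Finset.range (t+1), p ^ j := (Finset.sum_range_succ (fun j => p ^ j) t).symm
    linarith
  calc ∑ k ∈ A, ((if k = K-2 then 1+p else 1)/((K:ℝ)-1+p)) *
        (∑ i ∈ S, oa p 1 S i * Real.log (oa p 1 S i / oa p (Equiv.swap (↑k) (↑(k+1))) S i))
      ≤ ∑ k ∈ A, ((1-p)^2 * (-Real.log p) / (1 - p ^ S.card) / ((K:ℝ)-1+p)) *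
          ((if k = K-2 then 1+p else 1) * p ^ ((A.filter (fun y => y < k)).card)) :=
        Finset.sum_le_sum hstep
    _ = ((1-p)^2 * (-Real.log p) / (1 - p ^ S.card) / ((K:ℝ)-1+p)) *
          ∑ k ∈ A, ((if k = K-2 then 1+p else 1) * p ^ ((A.filter (fun y => y < k)).card)) := by
        rw [Finset.mul_sum]
    _ ≤ ((1-p)^2 * (-Real.log p) / (1 - p ^ S.card) / ((K:ℝ)-1+p)) *
          ((1 - p ^ S.card) / (1 - p)) := by
        apply mul_le_mul_of_nonneg_left hsum1
        exact div_nonneg (div_nonneg (mul_nonneg (sq_nonneg _) hL) hm.le) hKp.le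
    _ = (1-p) * (-Real.log p) / ((K:ℝ)-1+p) := by
        field_simp
end perS

/-- Proposition 6: the max-min value
`sup_λ inf_{f' ∈ M_p, σ_{f'} ≠ id} D_λ(f^{OA} ‖ f')` for full-ranking
identification is at most `J_*^{OA} = log(1/p)·(1−p)/(K−1+p)`.  Here `f^{OA}`
is the OA preference with the identity ranking, the alternatives `f'` range
over the `p`-separable preferences whose ranking `σ` is not the identity, and
`D_λ(f‖f') = ∑_{S∈𝒮} λ(S)·∑_{i∈S} f(i|S)·log(f(i|S)/f'(i|S))`. -/
theorem stmt12 (p : ℝ) (hp0 : 0 < p) (hp1 : p < 1) (K : ℕ) (hK : 2 ≤ K) :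
    sSup { v : ℝ | ∃ lam : Finset (Fin K) → ℝ,
        (∀ S : Finset (Fin K), 2 ≤ S.card → 0 ≤ lam S) ∧
        (∑ S ∈ Finset.univ.filter (fun S : Finset (Fin K) => 2 ≤ S.card), lam S) = 1 ∧
        v = sInf { w : ℝ | ∃ f' : Fin K → Finset (Fin K) → ℝ,
            ∃ σ : Equiv.Perm (Fin K),
            (∀ S : Finset (Fin K), 2 ≤ S.card → ∀ i ∈ S, 0 < f' i S) ∧
            (∀ S : Finset (Fin K), 2 ≤ S.card → ∑ i ∈ S, f' i S = 1) ∧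
            (∀ S : Finset (Fin K), 2 ≤ S.card → ∀ i ∈ S, ∀ i' ∈ S,
              σ i' < σ i → f' i S ≤ p * f' i' S) ∧
            σ ≠ 1 ∧
            w = ∑ S ∈ Finset.univ.filter (fun S : Finset (Fin K) => 2 ≤ S.card),
                  lam S * ∑ i ∈ S, oa p 1 S i * Real.log (oa p 1 S i / f' i S) } }
      ≤ Real.log (1 / p) * (1 - p) / ((K : ℝ) - 1 + p) := by
  haveI : NeZero K := ⟨by omega⟩
  have hKR : (2:ℝ) ≤ (K:ℝ) := by exact_mod_cast hK
  have hKp : (0:ℝ) < (K:ℝ)-1+p := by linarith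
  have hL : 0 ≤ -Real.log p := by have := Real.log_neg hp0 hp1; linarith
  have hJform : Real.log (1/p) * (1-p) / ((K:ℝ)-1+p) = (1-p)*(-Real.log p)/((K:ℝ)-1+p) := by
    rw [one_div, Real.log_inv]; ring
  have hJ0 : 0 ≤ Real.log (1/p) * (1-p) / ((K:ℝ)-1+p) := by
    rw [hJform]; exact div_nonneg (mul_nonneg (by linarith) hL) hKp.le
  apply Real.sSup_le _ hJ0
  rintro v ⟨lam, hlam0, hlam1, rfl⟩
  set J' := (1-p)*(-Real.log p)/((K:ℝ)-1+p) with hJ'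
  set E : ℕ → ℝ := fun k => ∑ S ∈ Finset.univ.filter (fun S : Finset (Fin K) => 2 ≤ S.card),
      lam S * ∑ i ∈ S, oa p 1 S i *
        Real.log (oa p 1 S i / oa p (Equiv.swap (↑k) (↑(k+1))) S i) with hE
  set wt : ℕ → ℝ := fun k => (if k = K-2 then 1+p else 1)/((K:ℝ)-1+p) with hwt
  have hwpos : ∀ k, 0 < wt k := by
    intro k
    apply div_pos _ hKp
    split_ifs <;> linarith
  have hwsum : ∑ k ∈ Finset.range (K-1), wt k = 1 := by
    rw [hwt]
    rw [← Finset.sum_div]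
    have h1 : ∀ k : ℕ, (if k = K-2 then (1:ℝ)+p else 1) = 1 + (if k = K-2 then p else 0) := by
      intro k; split_ifs <;> ring
    rw [Finset.sum_congr rfl fun k _ => h1 k, Finset.sum_add_distrib,
      Finset.sum_ite_eq' (Finset.range (K-1)) (K-2) (fun _ => p)]
    rw [if_pos (Finset.mem_range.mpr (by omega)), Finset.sum_const, Finset.card_range]
    have : ((K-1 : ℕ) : ℝ) = (K:ℝ) - 1 := by
      rw [Nat.cast_sub (by omega), Nat.cast_one]
    rw [nsmul_eq_mul, this, mul_one]
    exact div_self (by linarith)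
  have hwE : ∑ k ∈ Finset.range (K-1), wt k * E k ≤ J' := by
    have hswap : ∑ k ∈ Finset.range (K-1), wt k * E k
        = ∑ S ∈ Finset.univ.filter (fun S : Finset (Fin K) => 2 ≤ S.card),
            lam S * ∑ k ∈ Finset.range (K-1), wt k *
              ∑ i ∈ S, oa p 1 S i *
                Real.log (oa p 1 S i / oa p (Equiv.swap (↑k) (↑(k+1))) S i) := by
      rw [hE]
      calc ∑ k ∈ Finset.range (K-1), wt k *
              ∑ S ∈ Finset.univ.filter (fun S : Finset (Fin K) => 2 ≤ S.card),
                lam S * ∑ i ∈ S, oa p 1 S i *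
                  Real.log (oa p 1 S i / oa p (Equiv.swap (↑k) (↑(k+1))) S i)
          = ∑ k ∈ Finset.range (K-1),
              ∑ S ∈ Finset.univ.filter (fun S : Finset (Fin K) => 2 ≤ S.card),
                wt k * (lam S * ∑ i ∈ S, oa p 1 S i *
                  Real.log (oa p 1 S i / oa p (Equiv.swap (↑k) (↑(k+1))) S i)) :=
            Finset.sum_congr rfl fun k _ => Finset.mul_sum _ _ _
        _ = ∑ S ∈ Finset.univ.filter (fun S : Finset (Fin K) => 2 ≤ S.card),
              ∑ k ∈ Finset.range (K-1),
                wt k * (lam S * ∑ i ∈ S, oa p 1 S i *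
                  Real.log (oa p 1 S i / oa p (Equiv.swap (↑k) (↑(k+1))) S i)) :=
            Finset.sum_comm
        _ = ∑ S ∈ Finset.univ.filter (fun S : Finset (Fin K) => 2 ≤ S.card),
              lam S * ∑ k ∈ Finset.range (K-1), wt k *
                ∑ i ∈ S, oa p 1 S i *
                  Real.log (oa p 1 S i / oa p (Equiv.swap (↑k) (↑(k+1))) S i) := by
            refine Finset.sum_congr rfl fun S _ => ?_
            rw [Finset.mul_sum]
            exact Finset.sum_congr rfl fun k _ => by ring
    rw [hswap]
    have hstep : ∀ S ∈ Finset.univ.filter (fun S : Finset (Fin K) => 2 ≤ S.card),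
        lam S * ∑ k ∈ Finset.range (K-1), wt k *
          ∑ i ∈ S, oa p 1 S i * Real.log (oa p 1 S i / oa p (Equiv.swap (↑k) (↑(k+1))) S i)
        ≤ lam S * J' := by
      intro S hSmem
      have hS2 : 2 ≤ S.card := (Finset.mem_filter.mp hSmem).2
      exact mul_le_mul_of_nonneg_left (perS hp0 hp1 hK hS2) (hlam0 S hS2)
    calc ∑ S ∈ Finset.univ.filter (fun S : Finset (Fin K) => 2 ≤ S.card),
          lam S * ∑ k ∈ Finset.range (K-1), wt k *
            ∑ i ∈ S, oa p 1 S i * Real.log (oa p 1 S i / oa p (Equiv.swap (↑k) (↑(k+1))) S i)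
        ≤ ∑ S ∈ Finset.univ.filter (fun S : Finset (Fin K) => 2 ≤ S.card), lam S * J' :=
          Finset.sum_le_sum hstep
      _ = J' := by rw [← Finset.sum_mul, hlam1, one_mul]
  have hex : ∃ k ∈ Finset.range (K-1), E k ≤ J' := by
    by_contra hc
    push_neg at hc
    have hlt : ∑ k ∈ Finset.range (K-1), wt k * J'
        < ∑ k ∈ Finset.range (K-1), wt k * E k := by
      apply Finset.sum_lt_sum_of_nonempty ⟨0, Finset.mem_range.mpr (by omega)⟩
      intro k hk
      exact mul_lt_mul_of_pos_left (hc k hk) (hwpos k)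
    rw [← Finset.sum_mul, hwsum, one_mul] at hlt
    linarith
  obtain ⟨k, hkmem, hkle⟩ := hex
  have hklt : k < K - 1 := Finset.mem_range.mp hkmem
  have hva : (((k:ℕ) : Fin K) : ℕ) = k := Fin.val_cast_of_lt (by omega)
  have hvb : ((((k+1:ℕ)) : Fin K) : ℕ) = k+1 := Fin.val_cast_of_lt (by omega)
  have hσ : Equiv.swap ((k:ℕ) : Fin K) (((k+1:ℕ)) : Fin K) ≠ 1 := by
    intro h
    have h2 : Equiv.swap ((k:ℕ) : Fin K) (((k+1:ℕ)) : Fin K) ((k:ℕ) : Fin K)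
        = ((k:ℕ) : Fin K) := by rw [h]; rfl
    rw [Equiv.swap_apply_left] at h2
    have := congrArg Fin.val h2
    omega
  have hmem : E k ∈ { w : ℝ | ∃ f' : Fin K → Finset (Fin K) → ℝ,
      ∃ σ : Equiv.Perm (Fin K),
      (∀ S : Finset (Fin K), 2 ≤ S.card → ∀ i ∈ S, 0 < f' i S) ∧
      (∀ S : Finset (Fin K), 2 ≤ S.card → ∑ i ∈ S, f' i S = 1) ∧
      (∀ S : Finset (Fin K), 2 ≤ S.card → ∀ i ∈ S, ∀ i' ∈ S,
        σ i' < σ i → f' i S ≤ p * f' i' S) ∧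
      σ ≠ 1 ∧
      w = ∑ S ∈ Finset.univ.filter (fun S : Finset (Fin K) => 2 ≤ S.card),
            lam S * ∑ i ∈ S, oa p 1 S i * Real.log (oa p 1 S i / f' i S) } := by
    refine ⟨fun i S => oa p (Equiv.swap ((k:ℕ) : Fin K) (((k+1:ℕ)) : Fin K)) S i,
      Equiv.swap ((k:ℕ) : Fin K) (((k+1:ℕ)) : Fin K),
      fun S hS2 i hi => oa_pos hp0 hp1 _ hi,
      fun S hS2 => oa_sum hp0 hp1 _ (Finset.card_pos.mp (by omega)),
      fun S hS2 i hi i' hi' hlt => oa_sep hp0 hp1 _ hi hi' hlt,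
      hσ, ?_⟩
    rw [hE]
  rcases em (BddBelow { w : ℝ | ∃ f' : Fin K → Finset (Fin K) → ℝ,
      ∃ σ : Equiv.Perm (Fin K),
      (∀ S : Finset (Fin K), 2 ≤ S.card → ∀ i ∈ S, 0 < f' i S) ∧
      (∀ S : Finset (Fin K), 2 ≤ S.card → ∑ i ∈ S, f' i S = 1) ∧
      (∀ S : Finset (Fin K), 2 ≤ S.card → ∀ i ∈ S, ∀ i' ∈ S,
        σ i' < σ i → f' i S ≤ p * f' i' S) ∧
      σ ≠ 1 ∧
      w = ∑ S ∈ Finset.univ.filter (fun S : Finset (Fin K) => 2 ≤ S.card),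
            lam S * ∑ i ∈ S, oa p 1 S i * Real.log (oa p 1 S i / f' i S) }) with hbd | hbd
  · calc sInf _ ≤ E k := csInf_le hbd hmem
      _ ≤ J' := hkle
      _ = Real.log (1 / p) * (1 - p) / ((K : ℝ) - 1 + p) := hJform.symm
  · rw [Real.sInf_of_not_bddBelow hbd]
    exact hJ0
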